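/- Let q = 2^ℓ, let 0 ≤ k < q^2 with k = wq + z, z < q. Suppose either w = 0, or there exists 1 ≤ i ≤ ℓ with w ≡ 0 (mod 2^i) and z ≢ −1 (mod 2^i). Then for every α, β ∈ F_{q^2} such that p_{α,β}(t) = t^{q+1} + α^q t^q + α t + (β + β^q) has q+1 distinct roots in F_{q^2}, the remainder of t^k upon division by p_{α,β} has degree strictly less than q. -/

import Mathlib

open Polynomial Finset

private lemma lucas_step {n j : ℕ} (h : Nat.choose n j % 2 = 1) :
    Nat.choose (n / 2) (j / 2) % 2 = 1 ∧ Nat.choose (n % 2) (j % 2) % 2 = 1 := by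
  haveI : Fact (Nat.Prime 2) := ⟨Nat.prime_two⟩
  have H := Choose.choose_modEq_choose_mod_mul_choose_div_nat (p := 2) (n := n) (k := j)
  unfold Nat.ModEq at H
  rw [h, Nat.mul_mod] at H
  have h1 := Nat.mod_two_eq_zero_or_one (Nat.choose (n % 2) (j % 2))
  have h2 := Nat.mod_two_eq_zero_or_one (Nat.choose (n / 2) (j / 2))
  rcases h1 with h1 | h1 <;> rcases h2 with h2 | h2 <;>
    rw [h1, h2] at H <;> norm_num at H <;> exact ⟨h2, h1⟩

private lemma lucas_div {n j : ℕ} (t : ℕ) (h : Nat.choose n j % 2 = 1) :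
    Nat.choose (n / 2 ^ t) (j / 2 ^ t) % 2 = 1 := by
  induction t with
  | zero => simpa using h
  | succ t ih =>
    have := (lucas_step ih).1
    rwa [Nat.div_div_eq_div_mul, Nat.div_div_eq_div_mul, ← pow_succ] at this

private lemma lucas_testBit {n j : ℕ} (h : Nat.choose n j % 2 = 1) (t : ℕ)
    (hb : j.testBit t = true) : n.testBit t = true := by
  have h2 := (lucas_step (lucas_div t h)).2
  rw [Nat.testBit_eq_decide_div_mod_eq] at hb ⊢
  simp only [decide_eq_true_eq] at hb ⊢
  rw [hb] at h2
  rcases Nat.mod_two_eq_zero_or_one (n / 2 ^ t) with h0 | h0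
  · rw [h0] at h2; simp [Nat.choose] at h2
  · exact h0

private lemma no_bad_j {ℓ q : ℕ} (hq : q = 2 ^ ℓ) (hℓ : 1 ≤ ℓ) (k w z : ℕ)
    (hk : k < q ^ 2) (hkwz : k = w * q + z) (hz : z < q)
    (hcond : w = 0 ∨ ∃ i, 1 ≤ i ∧ i ≤ ℓ ∧ w % 2 ^ i = 0 ∧ z % 2 ^ i ≠ 2 ^ i - 1)
    (j : ℕ) (hdvd : (q + 1) ∣ (j + 1)) : Nat.choose k j % 2 = 0 := by
  have hq2 : 2 ≤ q := by
    subst hq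
    calc 2 = 2 ^ 1 := (pow_one 2).symm
    _ ≤ 2 ^ ℓ := Nat.pow_le_pow_right (by norm_num) hℓ
  by_contra hodd'
  have hodd : Nat.choose k j % 2 = 1 := by omega
  have hjk : j ≤ k := by
    by_contra hlt
    rw [Nat.choose_eq_zero_of_lt (by omega)] at hodd; simp at hodd
  obtain ⟨m, hm⟩ := hdvd
  have hm1 : 1 ≤ m := by
    by_contra h
    have : m = 0 := by omega
    subst this; simp at hm
  have hmq : m ≤ q - 1 := by
    by_contra hgt
    have hqm : q ≤ m := by omega
    have h1 : (q + 1) * q ≤ (q + 1) * m := Nat.mul_le_mul_left _ hqm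
    have h2 : (q + 1) * q = q ^ 2 + q := by ring
    omega
  have hj : j = m * q + (m - 1) := by
    have : j + 1 = m * q + m := by rw [hm]; ring
    omega
  rcases hcond with hw0 | ⟨i, h1i, hiℓ, hw, hzz⟩
  · subst hw0
    have : q ≤ m * q := Nat.le_mul_of_pos_left q hm1
    omega
  · have hm1q : m - 1 < 2 ^ ℓ := by omega
    have hzq : z < 2 ^ ℓ := by omega
    have hjbit : ∀ t, j.testBit t =
        if t < ℓ then (m - 1).testBit t else m.testBit (t - ℓ) := by
      intro t; rw [hj, hq, Nat.mul_comm]; exact Nat.testBit_two_pow_mul_add m hm1q t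
    have hkbit : ∀ t, k.testBit t =
        if t < ℓ then z.testBit t else w.testBit (t - ℓ) := by
      intro t; rw [hkwz, hq, Nat.mul_comm]; exact Nat.testBit_two_pow_mul_add w hzq t
    have hmmod : m % 2 ^ i = 0 := by
      apply Nat.eq_of_testBit_eq
      intro t
      rw [Nat.zero_testBit, Nat.testBit_mod_two_pow]
      by_cases hti : t < i
      · simp only [hti, decide_true, Bool.true_and]
        by_contra hmt
        rw [Bool.not_eq_false] at hmt
        have hjt : j.testBit (ℓ + t) = true := by
          rw [hjbit (ℓ + t), if_neg (by omega)]
          simpa using hmt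
        have hkt := lucas_testBit hodd (ℓ + t) hjt
        rw [hkbit (ℓ + t), if_neg (by omega)] at hkt
        simp only [Nat.add_sub_cancel_left] at hkt
        have hwb : w.testBit t = (w % 2 ^ i).testBit t := by
          rw [Nat.testBit_mod_two_pow]; simp [hti]
        rw [hwb, hw, Nat.zero_testBit] at hkt
        exact Bool.false_ne_true hkt
      · simp [hti]
    obtain ⟨d, hd⟩ := Nat.dvd_of_mod_eq_zero hmmod
    have he : 1 ≤ 2 ^ i := Nat.one_le_two_pow
    have hd1 : 1 ≤ d := by
      by_contra h
      have : d = 0 := by omega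
      subst this; simp at hd; omega
    have hm1mod : (m - 1) % 2 ^ i = 2 ^ i - 1 := by
      have hsplit : m - 1 = 2 ^ i * (d - 1) + (2 ^ i - 1) := by
        have h1 : d - 1 + 1 = d := by omega
        have h2 : 2 ^ i * d = 2 ^ i * (d - 1) + 2 ^ i := by
          conv_lhs => rw [← h1]
          ring
        omega
      rw [hsplit, Nat.mul_add_mod, Nat.mod_eq_of_lt (by omega)]
    have hzmod : z % 2 ^ i = 2 ^ i - 1 := by
      apply Nat.eq_of_testBit_eq
      intro t
      rw [Nat.testBit_mod_two_pow, Nat.testBit_two_pow_sub_one]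
      by_cases hti : t < i
      · simp only [hti, decide_true, Bool.true_and]
        have hjt : j.testBit t = true := by
          rw [hjbit t, if_pos (by omega)]
          have h3 : (m - 1).testBit t = ((m - 1) % 2 ^ i).testBit t := by
            rw [Nat.testBit_mod_two_pow]; simp [hti]
          rw [h3, hm1mod, Nat.testBit_two_pow_sub_one]; simp [hti]
        have hkt := lucas_testBit hodd t hjt
        rwa [hkbit t, if_pos (by omega)] at hkt
      · simp [hti]
    exact hzz hzmod

private lemma eq_prod_of_roots {F : Type*} [Field F] [DecidableEq F] {p : F[X]} (hm : p.Monic)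
    {s : Finset F} (hcard : s.card = p.natDegree) (hr : ∀ x ∈ s, Polynomial.eval x p = 0) :
    p = ∏ x ∈ s, (X - C x) := by
  have hp0 : p ≠ 0 := hm.ne_zero
  have hsle : s.val ≤ p.roots := by
    rw [Multiset.le_iff_count]
    intro a
    by_cases ha : a ∈ s
    · have h1 : s.val.count a = 1 := Multiset.count_eq_one_of_mem s.nodup ha
      rw [h1, Polynomial.count_roots]
      exact (Polynomial.rootMultiplicity_pos hp0).mpr (hr a ha)
    · rw [Multiset.count_eq_zero_of_notMem (by simpa using ha)]
      exact Nat.zero_le _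
  have hprodd : (∏ x ∈ s, (X - C x)) ∣ p := by
    have h0 := (Multiset.prod_X_sub_C_dvd_iff_le_roots hp0 s.val).mpr hsle
    rwa [Finset.prod_eq_multiset_prod]
  have hNmonic : (∏ x ∈ s, (X - C x)).Monic :=
    monic_prod_of_monic _ _ fun x _ => monic_X_sub_C x
  have hNdeg : (∏ x ∈ s, (X - C x)).natDegree = s.card := by
    rw [natDegree_prod _ _ fun x _ => X_sub_C_ne_zero x]
    simp [natDegree_X_sub_C]
  obtain ⟨g, hg⟩ := hprodd
  have hgm : g.Monic := by
    have hlc : p.leadingCoeff = (∏ x ∈ s, (X - C x)).leadingCoeff * g.leadingCoeff := by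
      rw [hg, leadingCoeff_mul]
    rw [hm.leadingCoeff, hNmonic.leadingCoeff, one_mul] at hlc
    exact hlc.symm
  have hgdeg : g.natDegree = 0 := by
    have hmul : p.natDegree = (∏ x ∈ s, (X - C x)).natDegree + g.natDegree := by
      rw [hg, natDegree_mul hNmonic.ne_zero hgm.ne_zero]
    omega
  rw [hg, eq_one_of_monic_natDegree_zero hgm hgdeg, mul_one]

set_option maxHeartbeats 1600000 in
theorem stmt_13 {ℓ q : ℕ} (hq : q = 2 ^ ℓ) (hℓ : 1 ≤ ℓ) {F : Type*} [Field F] [Fintype F]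
    (hF : Fintype.card F = q ^ 2) (k w z : ℕ) (hk : k < q ^ 2) (hkwz : k = w * q + z)
    (hz : z < q)
    (hcond : w = 0 ∨ ∃ i, 1 ≤ i ∧ i ≤ ℓ ∧ w % 2 ^ i = 0 ∧ z % 2 ^ i ≠ 2 ^ i - 1)
    (α β : F)
    (hroots : ∃ s : Finset F, s.card = q + 1 ∧ ∀ x ∈ s,
      Polynomial.eval x
        (X ^ (q + 1) + C (α ^ q) * X ^ q + C α * X + C (β + β ^ q) : F[X]) = 0) :
    ((X ^ k : F[X]) %ₘ (X ^ (q + 1) + C (α ^ q) * X ^ q + C α * X + C (β + β ^ q))).degree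
      < (q : ℕ) := by
  classical
  obtain ⟨s, hs, hroots⟩ := hroots
  have hq2 : 2 ≤ q := by
    subst hq
    calc 2 = 2 ^ 1 := (pow_one 2).symm
    _ ≤ 2 ^ ℓ := Nat.pow_le_pow_right (by norm_num) hℓ
  have hq0 : q ≠ 0 := by omega
  -- characteristic 2
  have hcp : CharP F (ringChar F) := ringChar.charP F
  obtain ⟨n, hp, hcard⟩ := FiniteField.card F (ringChar F)
  have hchar2 : ringChar F = 2 := by
    have hpow : (ringChar F) ^ (n : ℕ) = 2 ^ (2 * ℓ) := by
      rw [← hcard, hF, hq, ← pow_mul]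
      ring_nf
    have hdvd1 : ringChar F ∣ 2 ^ (2 * ℓ) := by
      rw [← hpow]
      exact dvd_pow_self _ (by exact_mod_cast n.pos.ne')
    exact (Nat.prime_dvd_prime_iff_eq hp Nat.prime_two).mp (hp.dvd_of_dvd_pow hdvd1)
  haveI hchar : CharP F 2 := hchar2 ▸ hcp
  haveI : Fact (Nat.Prime 2) := ⟨Nat.prime_two⟩
  have h2 : (2 : F) = 0 := by exact_mod_cast CharP.cast_eq_zero F 2
  have haddself : ∀ a : F, a + a = 0 := fun a => by
    have : (2 : F) * a = 0 := by rw [h2, zero_mul]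
    linear_combination this
  have hneg : ∀ a : F, -a = a := fun a => by linear_combination -h2 * a
  set P : F[X] := X ^ (q + 1) + C (α ^ q) * X ^ q + C α * X + C (β + β ^ q) with hPdef
  -- monic / degree
  have hrestle : (C (α ^ q) * X ^ q + C α * X + C (β + β ^ q)).degree ≤ ((q : ℕ) : WithBot ℕ) := by
    refine (degree_add_le _ _).trans (max_le ((degree_add_le _ _).trans
      (max_le ?_ ?_)) ?_)
    · exact (degree_C_mul_X_pow_le _ _)
    · exact (degree_C_mul_X_le α).trans (by exact_mod_cast Nat.one_le_iff_ne_zero.mpr hq0)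
    · exact (degree_C_le).trans (by exact_mod_cast Nat.zero_le q)
  have hrest : (C (α ^ q) * X ^ q + C α * X + C (β + β ^ q)).degree < ((q + 1 : ℕ) : WithBot ℕ) :=
    lt_of_le_of_lt hrestle (by exact_mod_cast Nat.lt_succ_self q)
  have hP' : P = X ^ (q + 1) + (C (α ^ q) * X ^ q + C α * X + C (β + β ^ q)) := by
    rw [hPdef]; ring
  have hPm : P.Monic := by
    rw [hP']
    exact monic_X_pow_add hrest
  have hPdeg : P.degree = ((q + 1 : ℕ) : WithBot ℕ) := by
    rw [hP', degree_add_eq_left_of_degree_lt (by rwa [degree_X_pow]), degree_X_pow]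
  have hPnat : P.natDegree = q + 1 := natDegree_eq_of_degree_eq_some hPdeg
  have hP0 : P ≠ 0 := hPm.ne_zero
  -- factorization over s
  have hPfact : P = ∏ x ∈ s, (X - C x) :=
    eq_prod_of_roots hPm (by rw [hs, hPnat]) hroots
  -- the product of differences
  have hxqα : ∀ x ∈ s, x ^ q + α = ∏ y ∈ s.erase x, (x - y) := by
    intro x hx
    have hq0F : (q : F) = 0 := by
      have hdq : (2 : ℕ) ∣ q := by rw [hq]; exact dvd_pow_self 2 (by omega)
      exact (CharP.cast_eq_zero_iff F 2 q).mpr hdq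
    have hP2 : P = (X - C x) * ∏ y ∈ s.erase x, (X - C y) := by
      rw [hPfact, ← Finset.mul_prod_erase _ _ hx]
    have hd : derivative P = X ^ q + C α := by
      rw [hPdef]
      simp only [derivative_add, derivative_X_pow, derivative_C_mul, derivative_C,
        derivative_mul, derivative_X, Nat.cast_add, Nat.cast_one, hq0F]
      simp [C_add, C_1]
    have hd2 : derivative P = (∏ y ∈ s.erase x, (X - C y))
        + (X - C x) * derivative (∏ y ∈ s.erase x, (X - C y)) := by
      rw [hP2, derivative_mul, derivative_sub, derivative_X, derivative_C, sub_zero, one_mul]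
    have he1 : Polynomial.eval x (derivative P) = x ^ q + α := by
      rw [hd]; simp
    have he2 : Polynomial.eval x (derivative P) = ∏ y ∈ s.erase x, (x - y) := by
      rw [hd2]
      simp [eval_prod]
    rw [← he1, he2]
  have hune : ∀ x ∈ s, x ^ q + α ≠ 0 := by
    intro x hx
    rw [hxqα x hx]
    apply Finset.prod_ne_zero_iff.mpr
    intro y hy
    exact sub_ne_zero_of_ne (Ne.symm (Finset.mem_erase.mp hy).1)
  -- remainder
  set r : F[X] := (X ^ k : F[X]) %ₘ P with hrdef
  have hrdeg : r.degree < ((q + 1 : ℕ) : WithBot ℕ) := by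
    have := degree_modByMonic_lt (X ^ k : F[X]) hPm
    rwa [hPdeg] at this
  have hreval : ∀ x ∈ s, Polynomial.eval x r = x ^ k := by
    intro x hx
    rw [hrdef, modByMonic_eq_sub_mul_div _ P]
    simp [hroots x hx]
  -- interpolation and the coefficient formula
  have hinj : Set.InjOn id (s : Set F) := fun a _ b _ h => h
  have hr_interp : r = Lagrange.interpolate s id fun x => x ^ k :=
    Lagrange.eq_interpolate_of_eval_eq _ hinj (by rw [hs]; exact hrdeg)
      (fun x hx => by simpa using hreval x hx)
  have hbasis : ∀ x ∈ s, (Lagrange.basis s id x).coeff q = (x ^ q + α)⁻¹ := by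
    intro x hx
    have hsplit : ∀ y ∈ s.erase x,
        Lagrange.basisDivisor (id x) (id y) = C (x - y)⁻¹ * (X - C y) := fun y hy => rfl
    rw [Lagrange.basis, Finset.prod_congr rfl hsplit, Finset.prod_mul_distrib, ← map_prod,
      coeff_C_mul]
    have hNdeg' : (∏ y ∈ s.erase x, (X - C y)).natDegree = q := by
      rw [natDegree_prod _ _ fun y _ => X_sub_C_ne_zero y]
      simp only [natDegree_X_sub_C, Finset.sum_const, smul_eq_mul, mul_one]
      rw [Finset.card_erase_of_mem hx, hs]
      omega
    have hNm : (∏ y ∈ s.erase x, (X - C y)).Monic :=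
      monic_prod_of_monic _ _ fun y _ => monic_X_sub_C y
    have hcoeff1 : (∏ y ∈ s.erase x, (X - C y)).coeff q = 1 := by
      conv_lhs => rw [show q = (∏ y ∈ s.erase x, (X - C y)).natDegree from hNdeg'.symm]
      exact hNm.coeff_natDegree
    rw [hcoeff1, mul_one, Finset.prod_inv_distrib, ← hxqα x hx]
  have hcoeffq : r.coeff q = ∑ x ∈ s, x ^ k * (x ^ q + α)⁻¹ := by
    rw [hr_interp, Lagrange.interpolate_apply, finset_sum_coeff]
    exact Finset.sum_congr rfl fun x hx => by rw [coeff_C_mul, hbasis x hx]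
  -- Frobenius facts
  have hfrobq : ∀ a b : F, (a + b) ^ q = a ^ q + b ^ q := by
    intro a b; rw [hq]; apply add_pow_char_pow
  have hxq2 : ∀ x : F, (x ^ q) ^ q = x := by
    intro x
    calc (x ^ q) ^ q = x ^ (q ^ 2) := by rw [← pow_mul, pow_two]
    _ = x ^ Fintype.card F := by rw [hF]
    _ = x := FiniteField.pow_card x
  set c : F := β + β ^ q + α ^ (q + 1) with hcdef
  have hueval : ∀ x ∈ s, (x ^ q + α) ^ (q + 1) = c := by
    intro x hx
    have hPx' : x ^ (q + 1) + α ^ q * x ^ q + α * x + (β + β ^ q) = 0 := by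
      have h0 := hroots x hx
      rw [hPdef] at h0
      simpa using h0
    have e1 : (x ^ q + α) ^ q = x + α ^ q := by rw [hfrobq, hxq2]
    calc (x ^ q + α) ^ (q + 1) = (x ^ q + α) ^ q * (x ^ q + α) := by rw [pow_succ]
    _ = (x + α ^ q) * (x ^ q + α) := by rw [e1]
    _ = c := by rw [hcdef]; linear_combination hPx' - (β + β ^ q) * h2
  have hc0 : c ≠ 0 := by
    obtain ⟨x, hx⟩ : s.Nonempty := by rw [← Finset.card_pos, hs]; omega
    rw [← hueval x hx]
    exact pow_ne_zero _ (hune x hx)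
  -- power sums over the image vanish
  have hQ : ∀ m : ℕ, ¬(q + 1) ∣ m → ∑ x ∈ s, (x ^ q + α) ^ m = 0 := by
    have hinj2 : ∀ a ∈ s, ∀ b ∈ s, a ^ q + α = b ^ q + α → a = b := by
      intro a _ b _ hab
      have h1 : a ^ q = b ^ q := by linear_combination hab
      have hzero : (a + b) ^ q = 0 := by rw [hfrobq, h1, haddself]
      have h3 : a + b = 0 := (pow_eq_zero_iff hq0).mp hzero
      have h4 : a = -b := eq_neg_of_add_eq_zero_left h3
      rwa [hneg b] at h4
    set t : Finset F := s.image (fun x => x ^ q + α) with ht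
    have htcard : t.card = q + 1 := by
      rw [ht, Finset.card_image_of_injOn (fun a ha b hb h => hinj2 a ha b hb h), hs]
    have htval : ∀ v ∈ t, v ^ (q + 1) = c := by
      intro v hv
      rw [ht] at hv
      obtain ⟨x, hx, rfl⟩ := Finset.mem_image.mp hv
      exact hueval x hx
    have hh : (X ^ (q + 1) - C c : F[X]) = ∏ v ∈ t, (X - C v) := by
      apply eq_prod_of_roots (monic_X_pow_sub_C c (by omega))
      · rw [htcard, natDegree_X_pow_sub_C]
      · intro v hv; simp [htval v hv]
    have hmem : ∀ v : F, v ^ (q + 1) = c → v ∈ t := by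
      intro v hv
      have hev : Polynomial.eval v (X ^ (q + 1) - C c : F[X]) = 0 := by simp [hv]
      rw [hh, eval_prod] at hev
      obtain ⟨y, hy, hzero⟩ := Finset.prod_eq_zero_iff.mp hev
      have hvy : v = y := by
        have := hzero
        simp only [eval_sub, eval_X, eval_C] at this
        exact sub_eq_zero.mp this
      rwa [hvy]
    -- a primitive (q+1)-st root of unity
    obtain ⟨g, hg⟩ := IsCyclic.exists_generator (α := Fˣ)
    have horder : orderOf g = q ^ 2 - 1 := by
      rw [orderOf_eq_card_of_forall_mem_zpowers hg, Nat.card_eq_fintype_card,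
        Fintype.card_units, hF]
    have hdvd21 : (q + 1) ∣ (q ^ 2 - 1) := by
      refine ⟨q - 1, ?_⟩
      have := Nat.sq_sub_sq q 1
      simpa using this
    have hq21 : q ^ 2 - 1 ≠ 0 := by
      have : 4 ≤ q ^ 2 := by nlinarith
      omega
    set ζu : Fˣ := g ^ ((q ^ 2 - 1) / (q + 1)) with hζu
    have hordζ : orderOf ζu = q + 1 := by
      rw [hζu, orderOf_pow, horder, Nat.gcd_eq_right (Nat.div_dvd_of_dvd hdvd21),
        Nat.div_div_self hdvd21 hq21]
    set ζ : F := (ζu : F) with hζ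
    have hζpow : ζ ^ (q + 1) = 1 := by
      rw [hζ, ← Units.val_pow_eq_pow_val, ← hordζ, pow_orderOf_eq_one, Units.val_one]
    have hζm : ∀ m : ℕ, ¬(q + 1) ∣ m → ζ ^ m ≠ 1 := by
      intro m hm hcontra
      apply hm
      rw [← hordζ]
      apply orderOf_dvd_iff_pow_eq_one.mpr
      apply Units.ext
      rw [Units.val_pow_eq_pow_val, Units.val_one]
      exact hcontra
    have hζ0 : ζ ≠ 0 := Units.ne_zero ζu
    have hmap : t.image (fun v => ζ * v) = t := by
      apply Finset.eq_of_subset_of_card_le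
      · intro v' hv'
        obtain ⟨y, hy, rfl⟩ := Finset.mem_image.mp hv'
        apply hmem
        rw [mul_pow, hζpow, one_mul]
        exact htval y hy
      · rw [Finset.card_image_of_injective _ (mul_right_injective₀ hζ0)]
    intro m hm
    have hQt : ∑ x ∈ s, (x ^ q + α) ^ m = ∑ v ∈ t, v ^ m := by
      rw [ht, Finset.sum_image hinj2]
    have hQζ : ∑ v ∈ t, v ^ m = ζ ^ m * ∑ v ∈ t, v ^ m := by
      conv_lhs => rw [← hmap]
      rw [Finset.sum_image (fun a _ b _ h => mul_left_cancel₀ hζ0 h), Finset.mul_sum]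
      exact Finset.sum_congr rfl fun v _ => mul_pow ζ v m
    have hfac : (ζ ^ m - 1) * ∑ v ∈ t, v ^ m = 0 := by
      rw [sub_mul, one_mul, sub_eq_zero]
      exact hQζ.symm
    rcases mul_eq_zero.mp hfac with hcase | hcase
    · exact absurd (by rwa [sub_eq_zero] at hcase) (hζm m hm)
    · rw [hQt, hcase]
  -- the key vanishing sum
  have hT : ∑ x ∈ s, ((x ^ q + α) + α) ^ k * (x ^ q + α) = 0 := by
    have hexp : ∀ x : F, ((x ^ q + α) + α) ^ k * (x ^ q + α)
        = ∑ j ∈ Finset.range (k + 1),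
            (x ^ q + α) ^ (j + 1) * (α ^ (k - j) * (Nat.choose k j : F)) := by
      intro x
      rw [add_pow, Finset.sum_mul]
      exact Finset.sum_congr rfl fun j _ => by ring
    rw [Finset.sum_congr rfl fun x _ => hexp x, Finset.sum_comm]
    apply Finset.sum_eq_zero
    intro j _
    rw [← Finset.sum_mul]
    by_cases hdvd : (q + 1) ∣ (j + 1)
    · have hchoose := no_bad_j hq hℓ k w z hk hkwz hz hcond j hdvd
      have hcast : ((Nat.choose k j : ℕ) : F) = 0 :=
        (CharP.cast_eq_zero_iff F 2 _).mpr (Nat.dvd_of_mod_eq_zero hchoose)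
      rw [hcast, mul_zero, mul_zero]
    · rw [hQ (j + 1) hdvd, zero_mul]
  -- assemble: the coefficient vanishes
  have hzeroco : r.coeff q = 0 := by
    have hterm : ∀ x ∈ s, x ^ k * (x ^ q + α)⁻¹
        = c⁻¹ * (((x ^ q + α) + α) ^ k * (x ^ q + α)) ^ q := by
      intro x hx
      have hu0 := hune x hx
      have hinv : (x ^ q + α)⁻¹ = (x ^ q + α) ^ q * c⁻¹ := by
        apply inv_eq_of_mul_eq_one_right
        calc (x ^ q + α) * ((x ^ q + α) ^ q * c⁻¹)
            = (x ^ q + α) ^ (q + 1) * c⁻¹ := by rw [← mul_assoc, ← pow_succ']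
        _ = 1 := by rw [hueval x hx, mul_inv_cancel₀ hc0]
      have hbase : (x ^ q + α) + α = x ^ q := by
        rw [add_assoc, haddself α, add_zero]
      rw [hinv, hbase, mul_pow, ← pow_mul, ← pow_mul, mul_comm k q, pow_mul, pow_mul, hxq2]
      ring
    rw [hcoeffq, Finset.sum_congr rfl hterm, ← Finset.mul_sum]
    have hsum2 : ∑ x ∈ s, (((x ^ q + α) + α) ^ k * (x ^ q + α)) ^ q
        = (∑ x ∈ s, ((x ^ q + α) + α) ^ k * (x ^ q + α)) ^ q := by
      conv_rhs => rw [hq]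
      rw [sum_pow_char_pow]
      conv_lhs => rw [hq]
    rw [hsum2, hT, zero_pow hq0, mul_zero]
  -- conclude
  refine (degree_lt_iff_coeff_zero r q).mpr fun m hm => ?_
  rcases eq_or_lt_of_le hm with heq | hlt
  · have : m = q := by exact_mod_cast heq.symm
    rw [this, hzeroco]
  · apply coeff_eq_zero_of_degree_lt
    refine lt_of_lt_of_le hrdeg ?_
    exact_mod_cast Nat.succ_le_of_lt (by exact_mod_cast hlt)
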